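/- Overlap identity for optimal decompositions: if ρ = Σᵢ pᵢ|ψᵢ⟩⟨ψᵢ| with |ψᵢ⟩ = cos α|aᵢbᵢ⟩ + sin α|aᵢ⊥bᵢ⊥⟩ and |φᵢ⟩ = cos β̃|aᵢbᵢ⟩ + sin β̃|aᵢ⊥bᵢ⊥⟩, then with ρ_min = Σᵢ qᵢ|φᵢ⟩⟨φᵢ|, qᵢ = pᵢ|⟨ψᵢ|φᵢ⟩|²/Σₖ pₖ|⟨ψₖ|φₖ⟩|², one has √F(ρ, ρ_min) ≥ Σᵢ √(pᵢ qᵢ) |⟨ψᵢ|φᵢ⟩| = √(Σᵢ pᵢ |⟨ψᵢ|φᵢ⟩|²) = |cos(α − β̃)|. -/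

import Mathlib

open Matrix
open scoped ComplexOrder Kronecker

noncomputable section

/-- A density operator: positive semidefinite with unit trace. -/
def IsDensity {d : Type*} [Fintype d] [DecidableEq d] (ρ : Matrix d d ℂ) : Prop :=
  ρ.PosSemidef ∧ ρ.trace = 1

open Classical in
/-- Square root of a positive semidefinite matrix (junk value `0` otherwise). -/
noncomputable def matSqrt {d : Type*} [Fintype d] [DecidableEq d] (A : Matrix d d ℂ) :
    Matrix d d ℂ :=
  if h : A.PosSemidef then
    h.1.eigenvectorUnitary.1 * diagonal ((↑) ∘ Real.sqrt ∘ h.1.eigenvalues) *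
      (star h.1.eigenvectorUnitary : Matrix d d ℂ)
  else 0

/-- Uhlmann fidelity `F(ρ,σ) = (Tr √(√ρ σ √ρ))²`. -/
noncomputable def fid {d : Type*} [Fintype d] [DecidableEq d] (ρ σ : Matrix d d ℂ) : ℝ :=
  ((matSqrt (matSqrt ρ * σ * matSqrt ρ)).trace.re) ^ 2

/-- Bures angle `D(ρ,σ) = arccos √F(ρ,σ)`. -/
noncomputable def bures {d : Type*} [Fintype d] [DecidableEq d] (ρ σ : Matrix d d ℂ) : ℝ :=
  Real.arccos (Real.sqrt (fid ρ σ))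

abbrev Q1 := Matrix (Fin 2) (Fin 2) ℂ
abbrev Q2 := Matrix (Fin 2 × Fin 2) (Fin 2 × Fin 2) ℂ

/-- Separable two-qubit states: convex combinations of product states. -/
def SepState (σ : Q2) : Prop :=
  ∃ (m : ℕ) (p : Fin m → ℝ) (a b : Fin m → Q1),
    (∀ i, 0 ≤ p i) ∧ (∑ i, p i) = 1 ∧ (∀ i, IsDensity (a i)) ∧ (∀ i, IsDensity (b i)) ∧
    σ = ∑ i, p i • (a i ⊗ₖ b i)

/-- Geometric entanglement of a two-qubit state. -/
noncomputable def G2 (ρ : Q2) : ℝ := 1 - sSup {x : ℝ | ∃ σ, SepState σ ∧ x = fid ρ σ}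

/-- Square root of a positive semidefinite matrix (removed from Mathlib; restored here). -/
def Matrix.PosSemidef.sqrt {n : Type*} [Fintype n] [DecidableEq n] {A : Matrix n n ℂ}
    (hA : A.PosSemidef) : Matrix n n ℂ :=
  hA.1.eigenvectorUnitary.1 * diagonal ((↑) ∘ Real.sqrt ∘ hA.1.eigenvalues) *
    (star hA.1.eigenvectorUnitary : Matrix n n ℂ)

section SqrtAux
open scoped MatrixOrder

lemma Matrix.PosSemidef.sqrt_eq_cfc {n : Type*} [Fintype n] [DecidableEq n] {A : Matrix n n ℂ}
    (hA : A.PosSemidef) : hA.sqrt = CFC.sqrt A := by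
  rw [CFC.sqrt_eq_cfc, cfc_nnreal_eq_real _ A, hA.1.cfc_eq, IsHermitian.cfc, Unitary.conjStarAlgAut_apply,
    Matrix.PosSemidef.sqrt]
  congr 3
  funext i
  simp only [Function.comp_apply, Real.coe_sqrt, Real.coe_toNNReal _ (hA.eigenvalues_nonneg i)]
  rfl

lemma Matrix.PosSemidef.posSemidef_sqrt {n : Type*} [Fintype n] [DecidableEq n]
    {A : Matrix n n ℂ} (hA : A.PosSemidef) : hA.sqrt.PosSemidef := by
  rw [hA.sqrt_eq_cfc]
  exact (CFC.sqrt_nonneg A).posSemidef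

lemma Matrix.PosSemidef.sqrt_mul_self {n : Type*} [Fintype n] [DecidableEq n]
    {A : Matrix n n ℂ} (hA : A.PosSemidef) : hA.sqrt * hA.sqrt = A := by
  rw [hA.sqrt_eq_cfc]
  exact CFC.sqrt_mul_sqrt_self A hA.nonneg

lemma Matrix.PosSemidef.eq_sqrt_of_sq_eq {n : Type*} [Fintype n] [DecidableEq n]
    {A : Matrix n n ℂ} (hA : A.PosSemidef) {B : Matrix n n ℂ} (hB : B.PosSemidef)
    (h : A ^ 2 = B) : A = hB.sqrt := by
  rw [hB.sqrt_eq_cfc, ← h, CFC.sqrt_sq A hA.nonneg]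

end SqrtAux

namespace OverlapAux

variable {k n : Type*} [Fintype k] [Fintype n] [DecidableEq n]

lemma polar_decomp (C : Matrix k n ℂ) :
    ∃ W : Matrix k n ℂ,
      C = W * (posSemidef_conjTranspose_mul_self C).sqrt ∧
      Wᴴ * W * (posSemidef_conjTranspose_mul_self C).sqrt
        = (posSemidef_conjTranspose_mul_self C).sqrt ∧
      (1 - Wᴴ * W).PosSemidef := by
  have hH := posSemidef_conjTranspose_mul_self C
  have herm : (Cᴴ * C).IsHermitian := hH.1
  set V : Matrix n n ℂ := (herm.eigenvectorUnitary : Matrix n n ℂ) with hVdef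
  set d : n → ℝ := herm.eigenvalues with hddef
  have hd : ∀ i, 0 ≤ d i := hH.eigenvalues_nonneg
  have hVsV : star V * V = 1 := Matrix.mem_unitaryGroup_iff'.mp herm.eigenvectorUnitary.2
  have hVVs : V * star V = 1 := Matrix.mem_unitaryGroup_iff.mp herm.eigenvectorUnitary.2
  set Φ : (n → ℂ) → Matrix n n ℂ := fun f => V * diagonal f * star V with hΦ
  have key : ∀ f g : n → ℂ, Φ f * Φ g = Φ (fun i => f i * g i) := by
    intro f g
    show (V * diagonal f * star V) * (V * diagonal g * star V)
        = V * diagonal (fun i => f i * g i) * star V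
    calc (V * diagonal f * star V) * (V * diagonal g * star V)
        = V * (diagonal f * ((star V * V) * (diagonal g * star V))) := by
          simp only [Matrix.mul_assoc]
      _ = V * (diagonal f * diagonal g * star V) := by
          rw [hVsV, Matrix.one_mul, Matrix.mul_assoc]
      _ = V * diagonal (fun i => f i * g i) * star V := by
          rw [diagonal_mul_diagonal]; simp only [Matrix.mul_assoc]
  have hΦstar : ∀ f : n → ℂ, (Φ f)ᴴ = Φ (star f) := by
    intro f
    show (V * diagonal f * star V)ᴴ = V * diagonal (star f) * star V
    simp only [conjTranspose_mul, star_eq_conjTranspose, conjTranspose_conjTranspose,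
      diagonal_conjTranspose, Matrix.mul_assoc]
  have hΦcongr : ∀ f g : n → ℂ, (∀ i, f i = g i) → Φ f = Φ g := by
    intro f g h
    exact congrArg Φ (funext h)
  have hΦone : Φ (fun _ => 1) = 1 := by
    show V * diagonal (fun _ => (1:ℂ)) * star V = 1
    rw [diagonal_one, Matrix.mul_one, hVVs]
  have hspec : Cᴴ * C = Φ (fun i => ((d i : ℝ) : ℂ)) := herm.spectral_theorem
  have hSdef : hH.sqrt = Φ (fun i => ((Real.sqrt (d i) : ℝ) : ℂ)) := rfl
  set g : n → ℂ := fun i => if d i = 0 then 0 else ((Real.sqrt (d i) : ℝ) : ℂ)⁻¹ with hgdef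
  set e : n → ℂ := fun i => if d i = 0 then 0 else 1 with hedef
  have sqrt_ne : ∀ i, d i ≠ 0 → (Real.sqrt (d i) : ℂ) ≠ 0 := fun i h =>
    Complex.ofReal_ne_zero.mpr (Real.sqrt_ne_zero'.mpr (lt_of_le_of_ne (hd i) (Ne.symm h)))
  have hstarg : star g = g := by
    funext i
    by_cases h : d i = 0 <;>
      simp [hgdef, h, Pi.star_apply, ← Complex.ofReal_inv, Complex.conj_ofReal]
  -- conjugation computation: (C * Φ f)ᴴ * (C * Φ f) = Φ (star f * d * f)
  have conj_comp : ∀ f : n → ℂ, (C * Φ f)ᴴ * (C * Φ f)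
      = Φ (fun i => (star f) i * (((d i : ℝ) : ℂ) * f i)) := by
    intro f
    calc (C * Φ f)ᴴ * (C * Φ f) = (Φ f)ᴴ * ((Cᴴ * C) * Φ f) := by
          rw [conjTranspose_mul]
          simp only [Matrix.mul_assoc]
      _ = Φ (star f) * (Φ (fun i => ((d i : ℝ) : ℂ)) * Φ f) := by
          rw [hΦstar, hspec]
      _ = Φ (fun i => (star f) i * (((d i : ℝ) : ℂ) * f i)) := by
          rw [key, key]
  have hWW : (C * Φ g)ᴴ * (C * Φ g) = Φ e := by
    rw [conj_comp, hstarg]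
    apply hΦcongr
    intro i
    by_cases h : d i = 0
    · simp [hgdef, hedef, h]
    · have h2 : ((Real.sqrt (d i) : ℝ) : ℂ) * ((Real.sqrt (d i) : ℝ) : ℂ) = ((d i : ℝ) : ℂ) := by
        rw [← Complex.ofReal_mul, Real.mul_self_sqrt (hd i)]
      have h3 := sqrt_ne i h
      simp only [hgdef, hedef, if_neg h]
      field_simp
      linear_combination -h2
  refine ⟨C * Φ g, ?_, ?_, ?_⟩
  · -- C = W * sqrt
    have h1 : C * Φ g * hH.sqrt = C * Φ e := by
      rw [hSdef, Matrix.mul_assoc, key]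
      congr 1
      apply hΦcongr
      intro i
      by_cases h : d i = 0
      · simp [hgdef, hedef, h, Real.sqrt_eq_zero' , le_of_eq h.symm]
      · simp [hgdef, hedef, h, inv_mul_cancel₀ (sqrt_ne i h)]
    rw [h1]
    -- show C * Φ e = C
    have hZ : C * Φ (fun i => e i - 1) = 0 := by
      rw [← conjTranspose_mul_self_eq_zero, conj_comp]
      have : Φ (fun i => (star fun i => e i - 1) i * (((d i : ℝ) : ℂ) * (e i - 1))) = Φ (fun _ => 0) := by
        apply hΦcongr
        intro i
        by_cases h : d i = 0 <;> simp [hedef, h]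
      rw [this]
      show V * diagonal (fun _ => (0:ℂ)) * star V = 0
      simp
    have hde : diagonal e = diagonal (fun i => e i - 1) + 1 := by
      ext i j
      by_cases h : i = j
      · subst h; simp [diagonal_apply_eq]
      · simp [diagonal_apply_ne _ h, Matrix.one_apply_ne h]
    have expand : Φ e = Φ (fun i => e i - 1) + 1 := by
      show V * diagonal e * star V = V * diagonal (fun i => e i - 1) * star V + 1
      rw [hde, Matrix.mul_add, Matrix.mul_one, Matrix.add_mul, hVVs]
    rw [expand, Matrix.mul_add, hZ, zero_add, Matrix.mul_one]
  · -- WᴴW * sqrt = sqrt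
    rw [hWW, hSdef, key]
    symm
    apply hΦcongr
    intro i
    by_cases h : d i = 0
    · simp [hedef, h, Real.sqrt_eq_zero', le_of_eq h.symm]
    · simp [hedef, h]
  · -- 1 - WᴴW psd
    rw [hWW]
    have expand : (1 : Matrix n n ℂ) - Φ e = Φ (fun i => 1 - e i) := by
      have h1 : Φ (fun i => 1 - e i) + Φ e = Φ (fun _ => 1) := by
        rw [hΦ]
        show V * diagonal (fun i => 1 - e i) * star V + V * diagonal e * star V
            = V * diagonal (fun _ => (1:ℂ)) * star V
        have : diagonal (fun i => (1:ℂ) - e i) + diagonal e = diagonal (fun _ => (1:ℂ)) := by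
          ext i j
          by_cases h : i = j
          · subst h; simp [diagonal_apply_eq]
          · simp [diagonal_apply_ne _ h]
        rw [← this, Matrix.mul_add, Matrix.add_mul]
      rw [← hΦone, ← h1]
      abel
    rw [expand]
    show (V * diagonal (fun i => 1 - e i) * star V).PosSemidef
    rw [star_eq_conjTranspose]
    apply Matrix.PosSemidef.mul_mul_conjTranspose_same
    rw [posSemidef_diagonal_iff]
    intro i
    by_cases h : d i = 0 <;> simp [hedef, h, Complex.le_def]


lemma re_dot_self (z : n → ℂ) : (star z ⬝ᵥ z).re = ∑ i, ‖z i‖ ^ 2 := by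
  rw [dotProduct, Complex.re_sum]
  refine Finset.sum_congr rfl fun i _ => ?_
  rw [Pi.star_apply, RCLike.star_def, mul_comm, Complex.mul_conj, Complex.ofReal_re,
    ← Complex.sq_norm]

lemma cs_dot (x y : n → ℂ) :
    ‖star x ⬝ᵥ y‖ ≤ Real.sqrt (star x ⬝ᵥ x).re * Real.sqrt (star y ⬝ᵥ y).re := by
  have key := norm_inner_le_norm (𝕜 := ℂ)
      ((WithLp.equiv 2 (n → ℂ)).symm x) ((WithLp.equiv 2 (n → ℂ)).symm y)
  rw [EuclideanSpace.norm_eq, EuclideanSpace.norm_eq] at key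
  simp only [PiLp.inner_apply, RCLike.inner_apply, WithLp.equiv_symm_apply, WithLp.ofLp_toLp] at key
  rw [re_dot_self, re_dot_self]
  calc ‖star x ⬝ᵥ y‖ = ‖∑ i, y i * (starRingEnd ℂ) (x i)‖ := by
        congr 1
        exact Finset.sum_congr rfl fun i _ => mul_comm _ _
    _ ≤ _ := key

lemma abs_trace_le (M : Matrix n n ℂ) :
    ‖M.trace‖ ≤ (posSemidef_conjTranspose_mul_self M).sqrt.trace.re := by
  obtain ⟨W, hMW, hWS, hpos⟩ := polar_decomp M
  set S : Matrix n n ℂ := (posSemidef_conjTranspose_mul_self M).sqrt with hSdef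
  have hS : S.PosSemidef := (posSemidef_conjTranspose_mul_self M).posSemidef_sqrt
  set T : Matrix n n ℂ := hS.sqrt with hTdef
  have hT : T.PosSemidef := hS.posSemidef_sqrt
  have hTT : T * T = S := hS.sqrt_mul_self
  have hTherm : ∀ i j, star (T j i) = T i j := by
    intro i j
    rw [← Matrix.conjTranspose_apply, hT.1]
  have htrace : M.trace = (T * W * T).trace := by
    rw [hMW, ← hTT, ← Matrix.mul_assoc, Matrix.trace_mul_comm (W * T) T, ← Matrix.mul_assoc]
  have hub : ∀ u : n → ℂ, (star (W *ᵥ u) ⬝ᵥ (W *ᵥ u)).re ≤ (star u ⬝ᵥ u).re := by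
    intro u
    have h0 := hpos.dotProduct_mulVec_nonneg u
    rw [Matrix.sub_mulVec, dotProduct_sub, Matrix.one_mulVec] at h0
    have h1 : star (W *ᵥ u) ⬝ᵥ (W *ᵥ u) = star u ⬝ᵥ ((Wᴴ * W) *ᵥ u) := by
      simp only [Matrix.star_mulVec, Matrix.dotProduct_mulVec, ← Matrix.vecMul_vecMul]
    have h2 := (Complex.le_def.mp h0).1
    rw [Complex.zero_re, Complex.sub_re] at h2
    rw [h1]
    linarith
  rw [htrace]
  have step : ∀ i, ‖(T * W * T) i i‖ ≤ (S i i).re := by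
    intro i
    set u : n → ℂ := fun j => T j i with hu
    have e1 : (T * W * T) i i = star u ⬝ᵥ (W *ᵥ u) := by
      simp only [Matrix.mul_apply, Matrix.mulVec, dotProduct, Pi.star_apply, hu,
        hTherm, Finset.sum_mul, Finset.mul_sum]
      rw [Finset.sum_comm]
      refine Finset.sum_congr rfl fun j _ => Finset.sum_congr rfl fun l _ => by ring
    have e2 : star u ⬝ᵥ u = S i i := by
      rw [← hTT]
      simp only [Matrix.mul_apply, dotProduct, Pi.star_apply, hu, hTherm]
    have hnn : 0 ≤ (star u ⬝ᵥ u).re := (Complex.le_def.mp (dotProduct_star_self_nonneg u)).1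
    calc ‖(T * W * T) i i‖ = ‖star u ⬝ᵥ (W *ᵥ u)‖ := by rw [e1]
      _ ≤ Real.sqrt (star u ⬝ᵥ u).re * Real.sqrt (star (W *ᵥ u) ⬝ᵥ (W *ᵥ u)).re := cs_dot _ _
      _ ≤ Real.sqrt (star u ⬝ᵥ u).re * Real.sqrt (star u ⬝ᵥ u).re := by
          have := Real.sqrt_le_sqrt (hub u)
          have h0 := Real.sqrt_nonneg (star u ⬝ᵥ u).re
          nlinarith [Real.sqrt_nonneg (star (W *ᵥ u) ⬝ᵥ (W *ᵥ u)).re]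
      _ = (star u ⬝ᵥ u).re := Real.mul_self_sqrt hnn
      _ = (S i i).re := by rw [e2]
  calc ‖(T * W * T).trace‖ ≤ ∑ i, ‖(T * W * T) i i‖ := by
        rw [Matrix.trace]
        exact norm_sum_le _ _
    _ ≤ ∑ i, (S i i).re := Finset.sum_le_sum fun i _ => step i
    _ = S.trace.re := by rw [Matrix.trace, Complex.re_sum]; rfl

lemma trace_sqrt_comm [DecidableEq k] (C : Matrix k n ℂ) :
    (posSemidef_self_mul_conjTranspose C).sqrt.trace
      = (posSemidef_conjTranspose_mul_self C).sqrt.trace := by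
  obtain ⟨W, hCW, hWS, _⟩ := polar_decomp C
  set S : Matrix n n ℂ := (posSemidef_conjTranspose_mul_self C).sqrt with hSdef
  have hS : S.PosSemidef := (posSemidef_conjTranspose_mul_self C).posSemidef_sqrt
  have hSW : S * (Wᴴ * W) = S := by
    calc S * (Wᴴ * W) = (Wᴴ * W * S)ᴴ := by
          rw [Matrix.conjTranspose_mul, Matrix.conjTranspose_mul,
            Matrix.conjTranspose_conjTranspose, hS.1]
      _ = Sᴴ := by rw [hWS]
      _ = S := hS.1
  have h1 : (W * S * Wᴴ).PosSemidef := hS.mul_mul_conjTranspose_same W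
  have hCC : C * Cᴴ = W * (S * S) * Wᴴ := by
    conv_lhs => rw [hCW]
    rw [Matrix.conjTranspose_mul, hS.1]
    simp only [Matrix.mul_assoc]
  have hsq : (W * S * Wᴴ) ^ 2 = C * Cᴴ := by
    have hSS : S * S = Cᴴ * C := (posSemidef_conjTranspose_mul_self C).sqrt_mul_self
    calc (W * S * Wᴴ) ^ 2 = W * (S * (Wᴴ * W) * (S * Wᴴ)) := by
          rw [pow_two]; simp only [Matrix.mul_assoc]
      _ = W * (S * (S * Wᴴ)) := by rw [hSW]
      _ = W * (S * S) * Wᴴ := by simp only [Matrix.mul_assoc]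
      _ = C * Cᴴ := hCC.symm
  have heq := h1.eq_sqrt_of_sq_eq (posSemidef_self_mul_conjTranspose C) hsq
  rw [← heq, Matrix.trace_mul_cycle, hWS]

lemma sqrt_congr {A B : Matrix n n ℂ} (h : A = B) (hA : A.PosSemidef) (hB : B.PosSemidef) :
    hA.sqrt = hB.sqrt := by subst h; rfl



lemma le_sqrt_fid {d m : Type*} [Fintype d] [DecidableEq d] [Fintype m] [DecidableEq m]
    (A B : Matrix d m ℂ) :
    ‖(Aᴴ * B).trace‖ ≤ Real.sqrt (fid (A * Aᴴ) (B * Bᴴ)) := by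
  have hρ : (A * Aᴴ).PosSemidef := posSemidef_self_mul_conjTranspose A
  set R : Matrix d d ℂ := hρ.sqrt with hRdef
  have hmsρ : matSqrt (A * Aᴴ) = R := by
    rw [matSqrt, dif_pos hρ, hRdef, Matrix.PosSemidef.sqrt]
  have hRherm : Rᴴ = R := hρ.posSemidef_sqrt.1
  have hX : (R * (B * Bᴴ) * R).PosSemidef := by
    have := (posSemidef_self_mul_conjTranspose B).mul_mul_conjTranspose_same R
    rwa [hRherm] at this
  have hfid : fid (A * Aᴴ) (B * Bᴴ) = ((hX.sqrt).trace.re) ^ 2 := by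
    rw [fid, hmsρ]
    congr 2
    rw [matSqrt, dif_pos hX, Matrix.PosSemidef.sqrt]
  have hAB : A * (Aᴴ * B) = R * (R * B) := by
    rw [← Matrix.mul_assoc, ← Matrix.mul_assoc, hρ.sqrt_mul_self]
  have hmat : (Aᴴ * B)ᴴ * (Aᴴ * B) = (R * B)ᴴ * (R * B) := by
    calc (Aᴴ * B)ᴴ * (Aᴴ * B) = Bᴴ * (A * (Aᴴ * B)) := by
          rw [Matrix.conjTranspose_mul, Matrix.conjTranspose_conjTranspose, Matrix.mul_assoc]
      _ = Bᴴ * (R * (R * B)) := by rw [hAB]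
      _ = (R * B)ᴴ * (R * B) := by rw [Matrix.conjTranspose_mul, hRherm, Matrix.mul_assoc]
  have hmat2 : (R * B) * (R * B)ᴴ = R * (B * Bᴴ) * R := by
    rw [Matrix.conjTranspose_mul, hRherm]
    simp only [Matrix.mul_assoc]
  have e1 : (posSemidef_conjTranspose_mul_self (Aᴴ * B)).sqrt
      = (posSemidef_conjTranspose_mul_self (R * B)).sqrt := sqrt_congr hmat _ _
  have e2 : (posSemidef_self_mul_conjTranspose (R * B)).sqrt = hX.sqrt := sqrt_congr hmat2 _ hX
  have chain : ‖(Aᴴ * B).trace‖ ≤ (hX.sqrt).trace.re := by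
    calc ‖(Aᴴ * B).trace‖
        ≤ (posSemidef_conjTranspose_mul_self (Aᴴ * B)).sqrt.trace.re := abs_trace_le _
      _ = (posSemidef_conjTranspose_mul_self (R * B)).sqrt.trace.re := by rw [e1]
      _ = (posSemidef_self_mul_conjTranspose (R * B)).sqrt.trace.re := by
          rw [trace_sqrt_comm]
      _ = (hX.sqrt).trace.re := by rw [e2]
  calc ‖(Aᴴ * B).trace‖ ≤ (hX.sqrt).trace.re := chain
    _ ≤ |(hX.sqrt).trace.re| := le_abs_self _
    _ = Real.sqrt (fid (A * Aᴴ) (B * Bᴴ)) := by rw [hfid, Real.sqrt_sq_eq_abs]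

lemma dot_expand (c1 s1 c2 s2 : ℂ) (u up v vp : Fin 2 → ℂ) :
    (star (fun x : Fin 2 × Fin 2 => c1 * (u x.1 * v x.2) + s1 * (up x.1 * vp x.2)) ⬝ᵥ
      (fun x : Fin 2 × Fin 2 => c2 * (u x.1 * v x.2) + s2 * (up x.1 * vp x.2)))
    = star c1 * c2 * ((star u ⬝ᵥ u) * (star v ⬝ᵥ v))
      + star c1 * s2 * ((star u ⬝ᵥ up) * (star v ⬝ᵥ vp))
      + star s1 * c2 * ((star up ⬝ᵥ u) * (star vp ⬝ᵥ v))
      + star s1 * s2 * ((star up ⬝ᵥ up) * (star vp ⬝ᵥ vp)) := by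
  simp only [dotProduct, Pi.star_apply, Fintype.sum_prod_type, Fin.sum_univ_two, star_add,
    star_mul']
  ring

end OverlapAux

open Real in
/-- Overlap identity for matched pure-state ensembles: with
`|ψᵢ⟩ = cos α |aᵢbᵢ⟩ + sin α |aᵢ⊥bᵢ⊥⟩`, `|φᵢ⟩ = cos β̃ |aᵢbᵢ⟩ + sin β̃ |aᵢ⊥bᵢ⊥⟩`, and
`ρ_min = Σᵢ qᵢ |φᵢ⟩⟨φᵢ|` with `qᵢ ∝ pᵢ|⟨ψᵢ|φᵢ⟩|²`, one has
`√F(ρ,ρ_min) ≥ Σᵢ √(pᵢqᵢ)|⟨ψᵢ|φᵢ⟩| = √(Σᵢ pᵢ|⟨ψᵢ|φᵢ⟩|²) = |cos(α − β̃)|`. -/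
theorem overlap_identity (m : ℕ) (p : Fin m → ℝ)
    (a aperp b bperp : Fin m → Fin 2 → ℂ)
    (ha : ∀ i, star (a i) ⬝ᵥ a i = 1) (haperp : ∀ i, star (aperp i) ⬝ᵥ aperp i = 1)
    (hab : ∀ i, star (a i) ⬝ᵥ aperp i = 0)
    (hb : ∀ i, star (b i) ⬝ᵥ b i = 1) (hbperp : ∀ i, star (bperp i) ⬝ᵥ bperp i = 1)
    (hbb : ∀ i, star (b i) ⬝ᵥ bperp i = 0)
    (hp : ∀ i, 0 ≤ p i) (hpsum : (∑ i, p i) = 1)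
    (α βt : ℝ) (hα : α ∈ Set.Icc 0 (π / 4)) (hβt : βt ∈ Set.Icc 0 (π / 4))
    (ψ φ : Fin m → (Fin 2 × Fin 2 → ℂ))
    (hψ : ∀ i, ψ i = fun x => (Real.cos α : ℂ) * (a i x.1 * b i x.2)
        + (Real.sin α : ℂ) * (aperp i x.1 * bperp i x.2))
    (hφ : ∀ i, φ i = fun x => (Real.cos βt : ℂ) * (a i x.1 * b i x.2)
        + (Real.sin βt : ℂ) * (aperp i x.1 * bperp i x.2))
    (o : Fin m → ℂ) (ho : ∀ i, o i = star (ψ i) ⬝ᵥ φ i)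
    (q : Fin m → ℝ)
    (hq : ∀ i, q i = p i * ‖o i‖ ^ 2 / ∑ j, p j * ‖o j‖ ^ 2)
    (ρ ρmin : Q2)
    (hρ : ρ = ∑ i, p i • vecMulVec (ψ i) (star (ψ i)))
    (hρmin : ρmin = ∑ i, q i • vecMulVec (φ i) (star (φ i))) :
    (∑ i, Real.sqrt (p i * q i) * ‖o i‖) ≤ Real.sqrt (fid ρ ρmin) ∧
    (∑ i, Real.sqrt (p i * q i) * ‖o i‖)
      = Real.sqrt (∑ i, p i * ‖o i‖ ^ 2) ∧
    Real.sqrt (∑ i, p i * ‖o i‖ ^ 2) = |Real.cos (α - βt)| := by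
  have hπ := Real.pi_pos
  obtain ⟨hα0, hα1⟩ := hα
  obtain ⟨hβ0, hβ1⟩ := hβt
  set c := Real.cos (α - βt) with hc
  have hcpos : 0 < c := Real.cos_pos_of_mem_Ioo ⟨by linarith, by linarith⟩
  have hoc : ∀ i, o i = (c : ℂ) := by
    intro i
    rw [ho i, hψ i, hφ i, OverlapAux.dot_expand, ha i, hb i, hab i, hbb i,
      star_dotProduct (aperp i) (a i), star_dotProduct (bperp i) (b i), hab i, hbb i,
      haperp i, hbperp i]
    simp only [star_zero, mul_zero, zero_mul, add_zero, mul_one, one_mul, RCLike.star_def,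
      Complex.conj_ofReal, hc, Real.cos_sub]
    push_cast
    ring
  have habs : ∀ i, ‖o i‖ = c := by
    intro i
    rw [hoc i, Complex.norm_real, Real.norm_eq_abs, abs_of_pos hcpos]
  have hsum2 : (∑ j, p j * ‖o j‖ ^ 2) = c ^ 2 := by
    simp only [habs]
    rw [← Finset.sum_mul, hpsum, one_mul]
  have hqp : q = p := by
    funext i
    rw [hq i, habs, hsum2, mul_div_assoc, div_self (pow_ne_zero 2 hcpos.ne'), mul_one]
  subst hqp
  have hLHS : (∑ i, Real.sqrt (q i * q i) * ‖o i‖) = c := by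
    simp only [habs]
    have hs : ∀ i, Real.sqrt (q i * q i) = q i := fun i => Real.sqrt_mul_self (hp i)
    simp only [hs]
    rw [← Finset.sum_mul, hpsum, one_mul]
  refine ⟨?_, ?_, ?_⟩
  · rw [hLHS]
    set A : Matrix (Fin 2 × Fin 2) (Fin m) ℂ :=
      Matrix.of (fun x i => (Real.sqrt (q i) : ℂ) * ψ i x) with hAdef
    set B : Matrix (Fin 2 × Fin 2) (Fin m) ℂ :=
      Matrix.of (fun x i => (Real.sqrt (q i) : ℂ) * φ i x) with hBdef
    have hsq : ∀ i, (Real.sqrt (q i) : ℂ) * (Real.sqrt (q i) : ℂ) = (q i : ℂ) := by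
      intro i
      rw [← Complex.ofReal_mul, Real.mul_self_sqrt (hp i)]
    have hAA : A * Aᴴ = ρ := by
      rw [hρ]
      ext x y
      rw [Matrix.mul_apply, Matrix.sum_apply]
      refine Finset.sum_congr rfl fun i _ => ?_
      simp only [hAdef, Matrix.conjTranspose_apply, Matrix.of_apply, Matrix.smul_apply,
        vecMulVec_apply, Pi.star_apply, star_mul', RCLike.star_def, Complex.conj_ofReal]
      rw [Complex.real_smul]
      calc (Real.sqrt (q i) : ℂ) * ψ i x * ((Real.sqrt (q i) : ℂ) * (starRingEnd ℂ) (ψ i y))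
          = ((Real.sqrt (q i) : ℂ) * (Real.sqrt (q i) : ℂ)) * (ψ i x * (starRingEnd ℂ) (ψ i y)) := by
            ring
        _ = (q i : ℂ) * (ψ i x * (starRingEnd ℂ) (ψ i y)) := by rw [hsq i]
    have hBB : B * Bᴴ = ρmin := by
      rw [hρmin]
      ext x y
      rw [Matrix.mul_apply, Matrix.sum_apply]
      refine Finset.sum_congr rfl fun i _ => ?_
      simp only [hBdef, Matrix.conjTranspose_apply, Matrix.of_apply, Matrix.smul_apply,
        vecMulVec_apply, Pi.star_apply, star_mul', RCLike.star_def, Complex.conj_ofReal]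
      rw [Complex.real_smul]
      calc (Real.sqrt (q i) : ℂ) * φ i x * ((Real.sqrt (q i) : ℂ) * (starRingEnd ℂ) (φ i y))
          = ((Real.sqrt (q i) : ℂ) * (Real.sqrt (q i) : ℂ)) * (φ i x * (starRingEnd ℂ) (φ i y)) := by
            ring
        _ = (q i : ℂ) * (φ i x * (starRingEnd ℂ) (φ i y)) := by rw [hsq i]
    have htr : (Aᴴ * B).trace = (c : ℂ) := by
      have hdiag : ∀ i, (Aᴴ * B) i i = (q i : ℂ) * (c : ℂ) := by
        intro i
        rw [Matrix.mul_apply]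
        have hterm : ∀ x, Aᴴ i x * B x i
            = ((Real.sqrt (q i) : ℂ) * (Real.sqrt (q i) : ℂ)) * (star (ψ i) x * φ i x) := by
          intro x
          simp only [hAdef, hBdef, Matrix.conjTranspose_apply, Matrix.of_apply, star_mul',
            RCLike.star_def, Complex.conj_ofReal, Pi.star_apply]
          ring
        calc (∑ x, Aᴴ i x * B x i)
            = ∑ x, ((Real.sqrt (q i) : ℂ) * (Real.sqrt (q i) : ℂ)) * (star (ψ i) x * φ i x) :=
              Finset.sum_congr rfl fun x _ => hterm x
          _ = ((Real.sqrt (q i) : ℂ) * (Real.sqrt (q i) : ℂ)) * (star (ψ i) ⬝ᵥ φ i) := by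
              rw [← Finset.mul_sum]; rfl
          _ = (q i : ℂ) * (c : ℂ) := by rw [hsq i, ← ho i, hoc i]
      calc (Aᴴ * B).trace = ∑ i, (Aᴴ * B) i i := rfl
        _ = ∑ i, (q i : ℂ) * (c : ℂ) := Finset.sum_congr rfl fun i _ => hdiag i
        _ = (c : ℂ) := by
            rw [← Finset.sum_mul, ← Complex.ofReal_sum, hpsum, Complex.ofReal_one, one_mul]
    have hkey := OverlapAux.le_sqrt_fid A B
    rw [hAA, hBB, htr, Complex.norm_real, Real.norm_eq_abs, abs_of_pos hcpos] at hkey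
    exact hkey
  · rw [hLHS, hsum2, Real.sqrt_sq hcpos.le]
  · rw [hsum2, Real.sqrt_sq hcpos.le]
    exact (abs_of_pos hcpos).symm
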